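/- Let B₁ and B₂ be positive definite symmetric real n×n matrices. For every x ∈ ℝⁿ, the infimum over all y, z ∈ ℝⁿ with y + z = 2x of (1/2)(⟨B₁y, y⟩ + ⟨B₂z, z⟩) equals 2⟨(B₁⁻¹+B₂⁻¹)⁻¹x, x⟩. -/

import Mathlib

open Matrix

private lemma symm_dot {n : ℕ} {A : Matrix (Fin n) (Fin n) ℝ} (hA : A.IsHermitian)
    (v w : Fin n → ℝ) : (A *ᵥ v) ⬝ᵥ w = (A *ᵥ w) ⬝ᵥ v := by
  have hAt : Aᵀ = A := by
    have := hA.eq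
    rwa [Matrix.conjTranspose_eq_transpose_of_trivial] at this
  rw [dotProduct_comm ((A *ᵥ v)) w, Matrix.dotProduct_mulVec,
    ← Matrix.mulVec_transpose, hAt]

private lemma expand_dot {n : ℕ} {A : Matrix (Fin n) (Fin n) ℝ} (hA : A.IsHermitian)
    (a w : Fin n → ℝ) :
    (A *ᵥ (a + w)) ⬝ᵥ (a + w) =
      (A *ᵥ a) ⬝ᵥ a + 2 * ((A *ᵥ a) ⬝ᵥ w) + (A *ᵥ w) ⬝ᵥ w := by
  simp only [Matrix.mulVec_add, add_dotProduct, dotProduct_add]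
  rw [symm_dot hA w a]
  ring

theorem stmt1 {n : ℕ} (B₁ B₂ : Matrix (Fin n) (Fin n) ℝ)
    (h₁ : B₁.PosDef) (h₂ : B₂.PosDef) (x : Fin n → ℝ) :
    sInf {r : ℝ | ∃ y z : Fin n → ℝ, y + z = (2 : ℝ) • x ∧
        r = (1 / 2) * ((B₁ *ᵥ y) ⬝ᵥ y + (B₂ *ᵥ z) ⬝ᵥ z)} =
      2 * (((B₁⁻¹ + B₂⁻¹)⁻¹ *ᵥ x) ⬝ᵥ x) := by
  have hdet₁ : IsUnit B₁.det := isUnit_iff_ne_zero.mpr (ne_of_gt h₁.det_pos)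
  have hdet₂ : IsUnit B₂.det := isUnit_iff_ne_zero.mpr (ne_of_gt h₂.det_pos)
  set M := B₁ + B₂ with hMdef
  have hM : M.PosDef := h₁.add h₂
  have hdetM : IsUnit M.det := isUnit_iff_ne_zero.mpr (ne_of_gt hM.det_pos)
  have hMinv : M * M⁻¹ = 1 := Matrix.mul_nonsing_inv _ hdetM
  have hinvM : M⁻¹ * M = 1 := Matrix.nonsing_inv_mul _ hdetM
  -- key matrix identities
  have hsum : B₁⁻¹ + B₂⁻¹ = B₂⁻¹ * M * B₁⁻¹ := by
    simp only [hMdef, Matrix.mul_add, Matrix.add_mul]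
    rw [Matrix.mul_assoc B₂⁻¹ B₁ B₁⁻¹, Matrix.mul_nonsing_inv _ hdet₁, Matrix.mul_one,
      Matrix.nonsing_inv_mul _ hdet₂, Matrix.one_mul, add_comm]
  have hC : (B₁⁻¹ + B₂⁻¹)⁻¹ = B₁ * M⁻¹ * B₂ := by
    apply Matrix.inv_eq_right_inv
    rw [hsum]
    calc B₂⁻¹ * M * B₁⁻¹ * (B₁ * M⁻¹ * B₂)
        = B₂⁻¹ * (M * ((B₁⁻¹ * B₁) * (M⁻¹ * B₂))) := by
          simp only [Matrix.mul_assoc]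
      _ = 1 := by
          rw [Matrix.nonsing_inv_mul _ hdet₁, Matrix.one_mul,
            ← Matrix.mul_assoc M, hMinv, Matrix.one_mul,
            Matrix.nonsing_inv_mul _ hdet₂]
  have hswap : B₁ * M⁻¹ * B₂ = B₂ * M⁻¹ * B₁ := by
    have e1 : B₁ * M⁻¹ * B₂ = B₂ - B₂ * M⁻¹ * B₂ := by
      have : B₁ = M - B₂ := by rw [hMdef]; abel
      rw [this, Matrix.sub_mul, Matrix.sub_mul, hMinv, Matrix.one_mul]
    have e2 : B₂ * M⁻¹ * B₁ = B₂ - B₂ * M⁻¹ * B₂ := by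
      have : B₁ = M - B₂ := by rw [hMdef]; abel
      rw [this, Matrix.mul_sub, Matrix.mul_assoc B₂ M⁻¹ M, hinvM, Matrix.mul_one]
    rw [e1, e2]
  -- minimizers
  set y₀ : Fin n → ℝ := (2 : ℝ) • ((M⁻¹ * B₂) *ᵥ x) with hy₀
  set z₀ : Fin n → ℝ := (2 : ℝ) • ((M⁻¹ * B₁) *ᵥ x) with hz₀
  have hyz : y₀ + z₀ = (2 : ℝ) • x := by
    rw [hy₀, hz₀, ← smul_add, ← Matrix.add_mulVec, ← Matrix.mul_add,
      show B₂ + B₁ = M by rw [hMdef]; abel, hinvM, Matrix.one_mulVec]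
  have hp1 : B₁ *ᵥ y₀ = (2 : ℝ) • (((B₁⁻¹ + B₂⁻¹)⁻¹) *ᵥ x) := by
    rw [hy₀, Matrix.mulVec_smul, Matrix.mulVec_mulVec, ← Matrix.mul_assoc, ← hC]
  have hp2 : B₂ *ᵥ z₀ = (2 : ℝ) • (((B₁⁻¹ + B₂⁻¹)⁻¹) *ᵥ x) := by
    rw [hz₀, Matrix.mulVec_smul, Matrix.mulVec_mulVec, ← Matrix.mul_assoc, ← hswap, ← hC]
  set p : Fin n → ℝ := (2 : ℝ) • (((B₁⁻¹ + B₂⁻¹)⁻¹) *ᵥ x) with hp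
  -- the value at the minimizer
  have hval : (1 / 2) * ((B₁ *ᵥ y₀) ⬝ᵥ y₀ + (B₂ *ᵥ z₀) ⬝ᵥ z₀) =
      2 * (((B₁⁻¹ + B₂⁻¹)⁻¹ *ᵥ x) ⬝ᵥ x) := by
    rw [hp1, hp2, ← dotProduct_add, hyz, hp]
    simp only [dotProduct_smul, smul_dotProduct, smul_eq_mul]
    ring
  apply IsLeast.csInf_eq
  constructor
  · exact ⟨y₀, z₀, hyz, hval.symm⟩
  · rintro r ⟨y, z, hyzr, rfl⟩
    set w : Fin n → ℝ := y - y₀ with hw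
    have hy : y = y₀ + w := by rw [hw]; abel
    have hz : z = z₀ + (-w) := by
      have : z = (2:ℝ) • x - y := by rw [← hyzr]; abel
      rw [this, ← hyz, hy]; abel
    have hMw : 0 ≤ (B₁ *ᵥ w) ⬝ᵥ w + (B₂ *ᵥ w) ⬝ᵥ w := by
      have := hM.posSemidef.dotProduct_mulVec_nonneg w
      have hrw : star w ⬝ᵥ (M *ᵥ w) = (B₁ *ᵥ w) ⬝ᵥ w + (B₂ *ᵥ w) ⬝ᵥ w := by
        rw [hMdef, Matrix.add_mulVec]
        simp [dotProduct_add, dotProduct_comm]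
      rw [hrw] at this
      exact this
    have hcross : (B₁ *ᵥ y₀) ⬝ᵥ w = (B₂ *ᵥ z₀) ⬝ᵥ w := by rw [hp1, hp2]
    have hBneg : B₂ *ᵥ (-w) = -(B₂ *ᵥ w) := by rw [Matrix.mulVec_neg]
    rw [hy, hz, expand_dot h₁.isHermitian, expand_dot h₂.isHermitian, ← hval]
    have hnegdot : (B₂ *ᵥ z₀) ⬝ᵥ (-w) = -((B₂ *ᵥ z₀) ⬝ᵥ w) := by
      simp [dotProduct_neg]
    have hnegneg : (B₂ *ᵥ (-w)) ⬝ᵥ (-w) = (B₂ *ᵥ w) ⬝ᵥ w := by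
      simp [hBneg, neg_dotProduct, dotProduct_neg]
    rw [hnegdot, hnegneg, hcross]
    nlinarith [hMw]
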